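/- arXiv:2603.00747 — 2 statements merged into one kernel-verified Lean document; each statement's English description precedes it below -/
import Mathlib

section
/- Let Δ be a dyadic cube of rank s in 𝔾^d, let E ⊆ Δ be a Borel set with positive Haar measure, and fix l ∈ ℕ. Then there exists k₀ ≥ s such that for all k₁ > k₂ > ... > k_l ≥ k₀ there exists a point g ∈ Δ with the property that g ⊕ (⊕_{i=1}^{l} e^{σ^i}_{k_i}) ∈ E for every choice of sign vectors σ^1, ..., σ^l ∈ {0,1}^d, where e^σ_k ∈ 𝔾^d is the element whose j-th component is σ_j·e_k (e_k being the k-th generator of 𝔾). -/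
open MeasureTheory

/-- The dyadic group `𝔾`: 0-1 sequences with coordinatewise addition mod 2. -/
abbrev DyadicGroup : Type := ℕ → ZMod 2

/-- The dyadic cube of rank `s` in `𝔾^d` with base point `m`. -/
def dyadicCube (d s : ℕ) (m : Fin d → DyadicGroup) : Set (Fin d → DyadicGroup) :=
  {g | ∀ l : Fin d, ∀ j < s, g l j = m l j}

/-- The element `⊕_{i=1}^{l} e^{σ^i}_{k_i}` of `𝔾^d`, where `e^σ_k` has `j`-th
component `σ_j e_k` (`e_k` being the `k`-th generator of `𝔾`). -/
def offset {d l : ℕ} (k : Fin l → ℕ) (σ : Fin l → Fin d → ZMod 2) :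
    Fin d → DyadicGroup :=
  fun i t => ∑ u, if t = k u then σ u i else 0

namespace DensityAux

open MeasurableSpace Set symmDiff

variable {d : ℕ}

/-- Restriction to the first `k` coordinates in each component. -/
def R (d k : ℕ) (x : Fin d → DyadicGroup) : Fin d → Fin k → ZMod 2 :=
  fun i j => x i j

lemma measurable_R (d k : ℕ) : Measurable (R d k) :=
  measurable_pi_iff.mpr fun i => measurable_pi_iff.mpr fun j =>
    (measurable_pi_apply _).comp (measurable_pi_apply i)

/-- Finite unions of dyadic cubes (of a common rank). -/
def cubeSets (d : ℕ) : Set (Set (Fin d → DyadicGroup)) :=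
  {A | ∃ k S, A = R d k ⁻¹' S}

lemma R_mono {k k' : ℕ} (h : k ≤ k') (S : Set (Fin d → Fin k → ZMod 2)) :
    R d k ⁻¹' S = R d k' ⁻¹' ((fun a i (j : Fin k) => a i (Fin.castLE h j)) ⁻¹' S) := by
  ext x
  have : (fun i (j : Fin k) => R d k' x i (Fin.castLE h j)) = R d k x := by
    funext i j; simp [R]
  simp only [Set.mem_preimage, this]

lemma isSetAlgebra_cubeSets : IsSetAlgebra (cubeSets d) where
  empty_mem := ⟨0, ∅, by simp⟩
  compl_mem := by rintro s ⟨k, S, rfl⟩; exact ⟨k, Sᶜ, by rw [Set.preimage_compl]⟩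
  union_mem := by
    rintro s t ⟨k, S, rfl⟩ ⟨k', S', rfl⟩
    refine ⟨max k k',
      ((fun a i (j : Fin k) => a i (Fin.castLE (le_max_left k k') j)) ⁻¹' S) ∪
        ((fun a i (j : Fin k') => a i (Fin.castLE (le_max_right k k') j)) ⁻¹' S'), ?_⟩
    rw [R_mono (le_max_left k k') S, R_mono (le_max_right k k') S', Set.preimage_union]

lemma generateFrom_cubeSets :
    (inferInstance : MeasurableSpace (Fin d → DyadicGroup)) =
      MeasurableSpace.generateFrom (cubeSets d) := by
  refine le_antisymm ?_ (MeasurableSpace.generateFrom_le ?_)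
  · set m' := MeasurableSpace.generateFrom (cubeSets d) with hm'
    have hsing : ∀ (i : Fin d) (j : ℕ) (c : ZMod 2),
        MeasurableSet[m'] {x : Fin d → DyadicGroup | x i j = c} := fun i j c =>
      MeasurableSpace.measurableSet_generateFrom
        ⟨j + 1, {a | a i ⟨j, j.lt_succ_self⟩ = c}, rfl⟩
    have hev : ∀ (i : Fin d) (j : ℕ) (u : Set (ZMod 2)),
        MeasurableSet[m'] ((fun x : Fin d → DyadicGroup => x i j) ⁻¹' u) := by
      intro i j u
      have : (fun x : Fin d → DyadicGroup => x i j) ⁻¹' u =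
          ⋃ c ∈ u, {x : Fin d → DyadicGroup | x i j = c} := by
        ext x; simp
      rw [this]
      exact MeasurableSet.biUnion u.to_countable fun c _ => hsing i j c
    show MeasurableSpace.pi ≤ m'
    refine iSup_le fun i => ?_
    rw [MeasurableSpace.comap_le_iff_le_map]
    refine iSup_le fun j => ?_
    rw [MeasurableSpace.comap_le_iff_le_map]
    intro u _
    exact hev i j u
  · rintro A ⟨k, S, rfl⟩
    exact measurable_R d k S.toFinite.measurableSet

lemma sum_over_cubes (μ : Measure (Fin d → DyadicGroup)) (k : ℕ)
    (B : Set (Fin d → DyadicGroup)) (hB : MeasurableSet B) :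
    μ B = ∑ a : Fin d → Fin k → ZMod 2, μ (B ∩ R d k ⁻¹' {a}) := by
  have hU : ⋃ a : Fin d → Fin k → ZMod 2, B ∩ R d k ⁻¹' {a} = B := by
    ext x; simp [Set.mem_iUnion]
  rw [← tsum_fintype (L := .unconditional _), ← measure_iUnion ?_ ?_, hU]
  · intro a b hab
    refine Set.disjoint_left.mpr ?_
    rintro x ⟨-, ha⟩ ⟨-, hb⟩
    exact hab ((Set.mem_singleton_iff.mp ha).symm.trans (Set.mem_singleton_iff.mp hb))
  · exact fun a => hB.inter (measurable_R d k (measurableSet_singleton a))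

lemma measurable_vadd (v : Fin d → DyadicGroup) :
    Measurable (fun g : Fin d → DyadicGroup => v + g) := by
  refine measurable_pi_iff.mpr fun i => measurable_pi_iff.mpr fun j => ?_
  exact (Measurable.of_discrete (f := fun c : ZMod 2 => v i j + c)).comp
    ((measurable_pi_apply j).comp (measurable_pi_apply i))

lemma offset_zero {l : ℕ} (k : Fin l → ℕ) :
    offset (d := d) k (0 : Fin l → Fin d → ZMod 2) = 0 := by
  funext i t; simp [offset]

lemma offset_low {l k₀ : ℕ} (k : Fin l → ℕ) (hk : ∀ i, k₀ ≤ k i)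
    (σ : Fin l → Fin d → ZMod 2) (i : Fin d) (t : ℕ) (ht : t < k₀) :
    offset k σ i t = 0 := by
  apply Finset.sum_eq_zero
  intro u _
  rw [if_neg]
  intro h
  have := hk u
  omega

end DensityAux

open DensityAux symmDiff ENNReal in
/-- Lemma 2 (density lemma). -/
theorem density_translation_lemma (d : ℕ) (μ : Measure (Fin d → DyadicGroup))
    (hμ1 : μ Set.univ = 1)
    (hinv : ∀ x : Fin d → DyadicGroup, Measure.map (fun g => x + g) μ = μ)
    (s : ℕ) (m : Fin d → DyadicGroup) (E : Set (Fin d → DyadicGroup))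
    (hEΔ : E ⊆ dyadicCube d s m) (hEmeas : MeasurableSet E) (hEpos : 0 < μ E)
    (l : ℕ) :
    ∃ k₀, s ≤ k₀ ∧
      ∀ k : Fin l → ℕ, StrictAnti k → (∀ i, k₀ ≤ k i) →
        ∃ g ∈ dyadicCube d s m,
          ∀ σ : Fin l → Fin d → ZMod 2, g + offset k σ ∈ E := by
  classical
  haveI : IsFiniteMeasure μ := ⟨by rw [hμ1]; exact ENNReal.one_lt_top⟩
  set N : ℕ := Fintype.card (Fin l → Fin d → ZMod 2) with hNdef
  have hEfin : μ E ≠ ∞ := measure_ne_top μ E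
  -- translation invariance in usable form
  have htrans : ∀ (v : Fin d → DyadicGroup) (W : Set (Fin d → DyadicGroup)),
      MeasurableSet W → μ {h | v + h ∈ W} = μ W := by
    intro v W hW
    conv_rhs => rw [← hinv v]
    rw [Measure.map_apply (measurable_vadd v) hW]
    rfl
  -- Step 1: approximate E by a finite union of cubes
  have hdense := Measure.MeasureDense.of_generateFrom_isSetAlgebra_finite (μ := μ)
    isSetAlgebra_cubeSets generateFrom_cubeSets
  set ε : ℝ := (μ E).toReal / ((N + 1 : ℕ) : ℝ) with hεdef
  have hε : 0 < ε := by
    apply div_pos (ENNReal.toReal_pos hEpos.ne' hEfin)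
    positivity
  obtain ⟨A, hAmem, hA⟩ := hdense.approx E hEmeas hEfin ε hε
  have hofReal : ((N + 1 : ℕ) : ℝ≥0∞) * ENNReal.ofReal ε = μ E := by
    rw [hεdef, ENNReal.ofReal_div_of_pos (by positivity), ENNReal.ofReal_toReal hEfin,
      ENNReal.ofReal_natCast, ENNReal.mul_div_cancel (by simp) (ENNReal.natCast_ne_top _)]
  have hAmeas : MeasurableSet A := hdense.measurable A hAmem
  have hAE : μ (A \ E) < ENNReal.ofReal ε :=
    lt_of_le_of_lt (measure_mono fun x hx => Set.mem_symmDiff.mpr (Or.inr ⟨hx.1, hx.2⟩)) hA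
  have hEA : μ (E \ A) ≤ ENNReal.ofReal ε :=
    le_of_lt (lt_of_le_of_lt
      (measure_mono fun x hx => Set.mem_symmDiff.mpr (Or.inl ⟨hx.1, hx.2⟩)) hA)
  have hμA : (N : ℝ≥0∞) * ENNReal.ofReal ε ≤ μ A := by
    have hsubE : E ⊆ A ∪ E \ A := fun x hx =>
      (em (x ∈ A)).elim Or.inl fun h => Or.inr ⟨hx, h⟩
    have h1 : μ E ≤ μ A + ENNReal.ofReal ε :=
      le_trans (measure_mono hsubE)
        (le_trans (measure_union_le _ _) (add_le_add_right hEA _))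
    have h2 : (N : ℝ≥0∞) * ENNReal.ofReal ε + ENNReal.ofReal ε ≤ μ A + ENNReal.ofReal ε := by
      calc (N : ℝ≥0∞) * ENNReal.ofReal ε + ENNReal.ofReal ε
          = ((N + 1 : ℕ) : ℝ≥0∞) * ENNReal.ofReal ε := by push_cast; ring
        _ = μ E := hofReal
        _ ≤ μ A + ENNReal.ofReal ε := h1
    exact (ENNReal.add_le_add_iff_right ENNReal.ofReal_ne_top).mp h2
  have hNpos : (N : ℝ≥0∞) ≠ 0 := by
    simp [hNdef, Fintype.card_ne_zero]
  have key : (N : ℝ≥0∞) * μ (A \ E) < μ A :=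
    lt_of_lt_of_le
      ((ENNReal.mul_lt_mul_iff_right hNpos (ENNReal.natCast_ne_top N)).mpr hAE) hμA
  -- Step 2: write A as a union of cubes of rank k ≥ s
  obtain ⟨k1, S1, hAeq⟩ := hAmem
  set k : ℕ := max k1 s with hkdef
  set S : Set (Fin d → Fin k → ZMod 2) :=
    (fun a i (j : Fin k1) => a i (Fin.castLE (le_max_left k1 s) j)) ⁻¹' S1 with hSdef
  have hAeq' : A = R d k ⁻¹' S := by rw [hAeq, R_mono (le_max_left k1 s) S1]
  -- Step 3: pigeonhole to find a good cube
  have hex : ∃ a : Fin d → Fin k → ZMod 2,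
      (N : ℝ≥0∞) * μ ((A \ E) ∩ R d k ⁻¹' {a}) < μ (A ∩ R d k ⁻¹' {a}) := by
    by_contra hcon
    push_neg at hcon
    have : μ A ≤ (N : ℝ≥0∞) * μ (A \ E) := by
      rw [sum_over_cubes μ k A hAmeas, sum_over_cubes μ k (A \ E) (hAmeas.diff hEmeas),
        Finset.mul_sum]
      exact Finset.sum_le_sum fun a _ => hcon a
    exact absurd key (not_lt.mpr this)
  obtain ⟨a, ha⟩ := hex
  set C : Set (Fin d → DyadicGroup) := R d k ⁻¹' {a} with hCdef
  have hCmeas : MeasurableSet C := measurable_R d k (measurableSet_singleton a)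
  have haS : a ∈ S := by
    by_contra hmem
    have hemp : A ∩ C = ∅ := by
      rw [hAeq']
      ext x
      simp only [Set.mem_inter_iff, Set.mem_preimage, Set.mem_singleton_iff, Set.mem_empty_iff_false,
        iff_false, hCdef]
      rintro ⟨hxS, hxa⟩
      exact hmem (hxa ▸ hxS)
    rw [hemp] at ha
    simp at ha
  have hsub : C ⊆ A := by
    intro x hx
    rw [hAeq']
    have : R d k x = a := hx
    simpa [Set.mem_preimage, this] using haS
  have hkey : (N : ℝ≥0∞) * μ (C \ E) < μ C := by
    have h1 : A ∩ C = C := Set.inter_eq_self_of_subset_right hsub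
    have h2 : (A \ E) ∩ C = C \ E := by
      ext x
      exact ⟨fun ⟨⟨_, hne⟩, hc⟩ => ⟨hc, hne⟩, fun ⟨hc, hne⟩ => ⟨⟨hsub hc, hne⟩, hc⟩⟩
    rwa [h1, h2] at ha
  -- Conclusion
  refine ⟨k, le_max_right _ _, ?_⟩
  intro kv _ hge
  set v : (Fin l → Fin d → ZMod 2) → (Fin d → DyadicGroup) := fun σ => offset kv σ with hvdef
  have hvlow : ∀ σ (i : Fin d) (t : ℕ), t < k → v σ i t = 0 :=
    fun σ i t ht => offset_low kv hge σ i t ht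
  have hCinv : ∀ σ, {h | v σ + h ∈ C} = C := by
    intro σ
    ext x
    simp only [Set.mem_setOf_eq, hCdef, Set.mem_preimage, Set.mem_singleton_iff]
    have : R d k (v σ + x) = R d k x := by
      funext i j
      show (v σ + x) i j = x i j
      simp [hvlow σ i j j.isLt]
    rw [this]
  have hgood : ∀ σ, μ (C ∩ {h | h + v σ ∈ E}) = μ (C ∩ E) := by
    intro σ
    have h1 : {h | v σ + h ∈ E ∩ C} = {h | h + v σ ∈ E} ∩ C := by
      ext x
      simp only [Set.mem_setOf_eq, Set.mem_inter_iff]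
      rw [add_comm (v σ) x]
      exact and_congr Iff.rfl (by rw [add_comm x (v σ)]; exact Set.ext_iff.mp (hCinv σ) x)
    have h2 := htrans (v σ) (E ∩ C) (hEmeas.inter hCmeas)
    rw [h1] at h2
    rw [Set.inter_comm C, h2, Set.inter_comm]
  have hgoodmeas : ∀ σ, MeasurableSet {h | h + v σ ∈ E} := by
    intro σ
    have : {h | h + v σ ∈ E} = (fun h => v σ + h) ⁻¹' E := by
      ext x; simp [add_comm]
    rw [this]
    exact measurable_vadd (v σ) hEmeas
  set Bad : (Fin l → Fin d → ZMod 2) → Set (Fin d → DyadicGroup) :=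
    fun σ => C \ {h | h + v σ ∈ E} with hBaddef
  have hBadμ : ∀ σ, μ (Bad σ) = μ (C \ E) := by
    intro σ
    have e1 : μ (C ∩ {h | h + v σ ∈ E}) + μ (Bad σ) = μ C :=
      measure_inter_add_diff C (hgoodmeas σ)
    have e2 : μ (C ∩ E) + μ (C \ E) = μ C := measure_inter_add_diff C hEmeas
    rw [hgood σ] at e1
    have := e1.trans e2.symm
    exact (ENNReal.add_right_inj (measure_ne_top μ _)).mp this
  have hUnion : μ (⋃ σ, Bad σ) < μ C := by
    calc μ (⋃ σ, Bad σ) ≤ ∑' σ, μ (Bad σ) := measure_iUnion_le _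
      _ = ∑ σ, μ (Bad σ) := tsum_fintype _
      _ = (N : ℝ≥0∞) * μ (C \ E) := by
          simp only [hBadμ, Finset.sum_const, Finset.card_univ, nsmul_eq_mul, hNdef]
      _ < μ C := hkey
  have hpos : μ (C \ ⋃ σ, Bad σ) ≠ 0 := by
    intro h0
    have : μ C ≤ μ (⋃ σ, Bad σ) := by
      calc μ C ≤ μ ((C \ ⋃ σ, Bad σ) ∪ ⋃ σ, Bad σ) :=
            measure_mono fun x hx =>
              (em (x ∈ ⋃ σ, Bad σ)).elim Or.inr fun h => Or.inl ⟨hx, h⟩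
        _ ≤ μ (C \ ⋃ σ, Bad σ) + μ (⋃ σ, Bad σ) := measure_union_le _ _
        _ = μ (⋃ σ, Bad σ) := by rw [h0, zero_add]
    exact absurd hUnion (not_lt.mpr this)
  obtain ⟨g, hgC, hgB⟩ := nonempty_of_measure_ne_zero hpos
  have hgE : ∀ σ, g + v σ ∈ E := by
    intro σ
    by_contra h
    exact hgB (Set.mem_iUnion.mpr ⟨σ, hgC, h⟩)
  refine ⟨g, ?_, fun σ => hgE σ⟩
  have hg0 : g ∈ E := by
    have := hgE 0
    rwa [show v 0 = 0 from offset_zero kv, add_zero] at this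
  exact hEΔ hg0
end

section
/- Let Δ₀ be a dyadic cube in 𝔾^d and E a Borel set with μ(Δ₀ ∩ E)/μ(Δ₀) > 1 - 2^{-ld}. Fix k₁ > ... > k_l at least the rank of Δ₀. Then the intersection over all choices of σ^1, ..., σ^l ∈ {0,1}^d of the translates (Δ₀ ∩ E) ⊕ (⊕_{i=1}^l e^{σ^i}_{k_i}) has positive Haar measure; in particular it is nonempty. -/
open MeasureTheory

/-- Let `μ` be the normalized Haar measure on `𝔾^d` (characterized as a
translation-invariant Borel probability measure), `Δ₀` a dyadic cube of rank
`s`, and `E` a Borel set with `μ(Δ₀ ∩ E)/μ(Δ₀) > 1 − 2^{−ld}`.  Fix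
`k₁ > … > k_l ≥ s`.  Then the intersection, over all `σ¹, …, σˡ ∈ {0,1}^d`,
of the translates `(Δ₀ ∩ E) ⊕ (⊕_{i=1}^l e^{σ^i}_{k_i})` has positive
measure; in particular it is nonempty. -/
theorem translates_intersection_pos (d : ℕ) (μ : Measure (Fin d → DyadicGroup))
    (hμ1 : μ Set.univ = 1)
    (hinv : ∀ x : Fin d → DyadicGroup, Measure.map (fun g => x + g) μ = μ)
    (s : ℕ) (m : Fin d → DyadicGroup) (E : Set (Fin d → DyadicGroup))
    (hEmeas : MeasurableSet E) (l : ℕ)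
    (hdens : 1 - 1 / 2 ^ (l * d)
      < μ (dyadicCube d s m ∩ E) / μ (dyadicCube d s m))
    (k : Fin l → ℕ) (hk : StrictAnti k) (hks : ∀ i, s ≤ k i) :
    0 < μ (⋂ σ : Fin l → Fin d → ZMod 2,
        (fun a => a + offset k σ) '' (dyadicCube d s m ∩ E)) ∧
    (⋂ σ : Fin l → Fin d → ZMod 2,
        (fun a => a + offset k σ) '' (dyadicCube d s m ∩ E)).Nonempty := by
  classical
  set Δ : Set (Fin d → DyadicGroup) := dyadicCube d s m with hΔdef
  set A : Set (Fin d → DyadicGroup) := Δ ∩ E with hAdef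
  -- measurability of the cube
  have hΔmeas : MeasurableSet Δ := by
    have h : Δ = ⋂ (i : Fin d), ⋂ (j : ℕ), ⋂ (_ : j < s),
        (fun g : Fin d → DyadicGroup => g i j) ⁻¹' {m i j} := by
      ext g
      simp [hΔdef, dyadicCube]
    rw [h]
    exact MeasurableSet.iInter fun i => MeasurableSet.iInter fun j =>
      MeasurableSet.iInter fun _ =>
        ((measurable_pi_apply j).comp (measurable_pi_apply i))
          (measurableSet_singleton _)
  have hA_sub : A ⊆ Δ := Set.inter_subset_left
  have hAmeas : MeasurableSet A := hΔmeas.inter hEmeas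
  -- translations are measurable
  have hadd : ∀ x : Fin d → DyadicGroup, Measurable fun g : Fin d → DyadicGroup => x + g := by
    intro x
    refine measurable_pi_lambda _ fun i => measurable_pi_lambda _ fun t => ?_
    have h : (fun g : Fin d → DyadicGroup => (x + g) i t)
        = (fun z : ZMod 2 => x i t + z) ∘ fun g : Fin d → DyadicGroup => g i t := rfl
    rw [h]
    exact (measurable_of_countable _).comp ((measurable_pi_apply t).comp (measurable_pi_apply i))
  -- every element is its own inverse
  have hself : ∀ x : Fin d → DyadicGroup, x + x = 0 := by
    intro x; funext i t
    have h2 : ∀ z : ZMod 2, z + z = 0 := by decide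
    exact h2 (x i t)
  -- offsets vanish on coordinates below `s`
  have hoff0 : ∀ (σ : Fin l → Fin d → ZMod 2) (i : Fin d) (j : ℕ), j < s →
      offset k σ i j = 0 := by
    intro σ i j hj
    refine Finset.sum_eq_zero fun u _ => ?_
    exact if_neg (ne_of_lt (lt_of_lt_of_le hj (hks u)))
  -- translation by an offset preserves the cube
  have hΔtrans : ∀ σ : Fin l → Fin d → ZMod 2,
      (fun g : Fin d → DyadicGroup => offset k σ + g) ⁻¹' Δ = Δ := by
    intro σ
    ext g
    simp only [Set.mem_preimage, hΔdef, dyadicCube, Set.mem_setOf_eq]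
    refine forall_congr' fun i => forall_congr' fun j => imp_congr_right fun hj => ?_
    show offset k σ i j + g i j = m i j ↔ g i j = m i j
    rw [hoff0 σ i j hj, zero_add]
  -- the translates are preimages
  have hT_pre : ∀ σ : Fin l → Fin d → ZMod 2,
      (fun a => a + offset k σ) '' A = (fun g : Fin d → DyadicGroup => offset k σ + g) ⁻¹' A := by
    intro σ
    have hcomm : (fun a : Fin d → DyadicGroup => a + offset k σ)
        = fun a : Fin d → DyadicGroup => offset k σ + a := by
      funext a; exact add_comm _ _
    have hinvol : Function.Involutive (fun a : Fin d → DyadicGroup => offset k σ + a) := by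
      intro a
      show offset k σ + (offset k σ + a) = a
      rw [← add_assoc, hself, zero_add]
    rw [hcomm]
    exact congrFun (Set.image_eq_preimage_of_inverse hinvol.leftInverse hinvol.rightInverse) A
  -- translation invariance of the measure
  have hμT : ∀ (σ : Fin l → Fin d → ZMod 2) (B : Set (Fin d → DyadicGroup)),
      MeasurableSet B → μ ((fun g : Fin d → DyadicGroup => offset k σ + g) ⁻¹' B) = μ B := by
    intro σ B hB
    conv_rhs => rw [← hinv (offset k σ)]
    rw [Measure.map_apply (hadd _) hB]
  -- translates lie inside the cube
  have hTΔ : ∀ σ : Fin l → Fin d → ZMod 2, (fun a => a + offset k σ) '' A ⊆ Δ := by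
    intro σ
    rw [hT_pre σ]
    intro g hg
    have h1 : offset k σ + g ∈ Δ := hA_sub hg
    have h2 : g ∈ (fun g : Fin d → DyadicGroup => offset k σ + g) ⁻¹' Δ := h1
    rwa [hΔtrans σ] at h2
  -- measure of cube minus translate
  have hdiffμ : ∀ σ : Fin l → Fin d → ZMod 2,
      μ (Δ \ (fun a => a + offset k σ) '' A) = μ (Δ \ A) := by
    intro σ
    rw [hT_pre σ]
    conv_lhs => rw [← hΔtrans σ]
    rw [← Set.preimage_diff]
    exact hμT σ _ (hΔmeas.diff hAmeas)
  -- basic measure facts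
  have hμΔtop : μ Δ ≠ ⊤ := by
    refine ne_top_of_le_ne_top ?_ (measure_mono (Set.subset_univ Δ))
    rw [hμ1]; exact ENNReal.one_ne_top
  have hμAtop : μ A ≠ ⊤ := ne_top_of_le_ne_top hμΔtop (measure_mono hA_sub)
  have hμΔ0 : μ Δ ≠ 0 := by
    intro h0
    have hA0 : μ A = 0 := le_antisymm (h0 ▸ measure_mono hA_sub) zero_le
    rw [hA0, h0] at hdens
    simp at hdens
  set N : ENNReal := 2 ^ (l * d) with hNdef
  have hN0 : N ≠ 0 := by positivity
  have hNtop : N ≠ ⊤ := by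
    simp [hNdef]
  have h1N : 1 / N ≤ 1 := by
    rw [one_div]
    exact ENNReal.inv_le_one.mpr (one_le_pow_of_one_le' (one_le_two : (1:ENNReal) ≤ 2) _)
  -- key density estimate
  have h1 : (1 - 1 / N) * μ Δ < μ A := by
    exact (ENNReal.lt_div_iff_mul_lt (Or.inl hμΔ0) (Or.inl hμΔtop)).mp hdens
  have hsum : μ A + μ (Δ \ A) = μ Δ := by
    have := measure_inter_add_diff Δ hAmeas (μ := μ)
    rwa [Set.inter_eq_right.mpr hA_sub] at this
  have hsplit : μ Δ = (1 - 1 / N) * μ Δ + (1 / N) * μ Δ := by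
    rw [← add_mul, tsub_add_cancel_of_le h1N, one_mul]
  have h2 : μ A + μ (Δ \ A) < μ A + (1 / N) * μ Δ := by
    calc μ A + μ (Δ \ A) = μ Δ := hsum
    _ = (1 - 1 / N) * μ Δ + (1 / N) * μ Δ := hsplit
    _ < μ A + (1 / N) * μ Δ := by
        refine (ENNReal.add_lt_add_iff_right ?_).mpr h1
        exact ENNReal.mul_ne_top (ne_top_of_le_ne_top ENNReal.one_ne_top h1N) hμΔtop
  have h3 : μ (Δ \ A) < (1 / N) * μ Δ := (ENNReal.add_lt_add_iff_left hμAtop).mp h2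
  have hkey : N * μ (Δ \ A) < μ Δ := by
    calc N * μ (Δ \ A) < N * ((1 / N) * μ Δ) := (ENNReal.mul_lt_mul_iff_right hN0 hNtop).mpr h3
    _ = μ Δ := by
        rw [← mul_assoc, mul_one_div, ENNReal.div_self hN0 hNtop, one_mul]
  -- the intersection
  set I : Set (Fin d → DyadicGroup) :=
    ⋂ σ : Fin l → Fin d → ZMod 2, (fun a => a + offset k σ) '' A with hIdef
  have hIsub : I ⊆ Δ :=
    (Set.iInter_subset _ (fun _ _ => (0 : ZMod 2))).trans (hTΔ _)
  have hcard : (Fintype.card (Fin l → Fin d → ZMod 2)) = 2 ^ (l * d) := by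
    simp [Fintype.card_fun, ← pow_mul, Nat.mul_comm d l]
  have hdiffI : μ (Δ \ I) < μ Δ := by
    calc μ (Δ \ I) = μ (⋃ σ : Fin l → Fin d → ZMod 2, Δ \ (fun a => a + offset k σ) '' A) := by
          rw [hIdef, Set.diff_iInter]
    _ ≤ ∑' σ : Fin l → Fin d → ZMod 2, μ (Δ \ (fun a => a + offset k σ) '' A) :=
          measure_iUnion_le _
    _ = ∑ σ : Fin l → Fin d → ZMod 2, μ (Δ \ A) := by
          rw [tsum_fintype]
          exact Finset.sum_congr rfl fun σ _ => hdiffμ σ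
    _ = (Fintype.card (Fin l → Fin d → ZMod 2) : ENNReal) * μ (Δ \ A) := by
          rw [Finset.sum_const, nsmul_eq_mul, Finset.card_univ]
    _ = N * μ (Δ \ A) := by
          rw [hcard, hNdef]; push_cast; ring
    _ < μ Δ := hkey
  have hpos : 0 < μ I := by
    rw [pos_iff_ne_zero]
    intro h0
    have hle : μ Δ ≤ μ (Δ ∩ I) + μ (Δ \ I) := measure_le_inter_add_diff μ Δ I
    rw [Set.inter_eq_right.mpr hIsub, h0, zero_add] at hle
    exact absurd (lt_of_le_of_lt hle hdiffI) (lt_irrefl _)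
  refine ⟨hpos, ?_⟩
  rw [Set.nonempty_iff_ne_empty]
  intro hempty
  rw [hIdef] at hempty
  rw [hIdef, hempty, measure_empty] at hpos
  exact lt_irrefl _ hpos
end
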